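/- There is a constant C1 > 0 depending only on d such that for every g ∈ SL_d(ℝ) the following holds: if h ∈ SL_d(ℝ) satisfies h·(gℤ^d) = gℤ^d (equality of subsets of ℝ^d) and ‖h − I_d‖_op < C1 · δ(g)^d, then h = I_d. (This expresses the lower bound r_0(x) ≥ C1 δ(x)^d for the injectivity radius of the point x = g·SL_d(ℤ) in SL_d(ℝ)/SL_d(ℤ).) -/

import Mathlib

open Matrix

/-- The Euclidean norm on `ℝ^d`. -/
noncomputable def euclNorm {d : ℕ} (x : Fin d → ℝ) : ℝ :=
  Real.sqrt (∑ i, x i ^ 2)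

/-- `δ(g) = inf {‖g v‖ : v ∈ ℤ^d, v ≠ 0}` (Euclidean norm). -/
noncomputable def deltaMin {d : ℕ} (g : Matrix (Fin d) (Fin d) ℝ) : ℝ :=
  sInf {r | ∃ v : Fin d → ℤ, v ≠ 0 ∧ r = euclNorm (g.mulVec (fun i => (v i : ℝ)))}

/-- The operator norm of a matrix with respect to the Euclidean norm on `ℝ^d`. -/
noncomputable def opNorm {d : ℕ} (M : Matrix (Fin d) (Fin d) ℝ) : ℝ :=
  sSup ((fun x => euclNorm (M.mulVec x)) '' {x : Fin d → ℝ | euclNorm x ≤ 1})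

/-- The lattice `gℤ^d = {g v : v ∈ ℤ^d} ⊆ ℝ^d`. -/
def latticeOf {d : ℕ} (g : Matrix (Fin d) (Fin d) ℝ) : Set (Fin d → ℝ) :=
  {x | ∃ v : Fin d → ℤ, x = g.mulVec (fun i => (v i : ℝ))}

section InjRadAuxSection

open MeasureTheory Submodule Set
open scoped ENNReal RealInnerProductSpace

namespace InjRadAux

noncomputable def toE (d : ℕ) : (Fin d → ℝ) ≃ₗ[ℝ] EuclideanSpace ℝ (Fin d) :=
  (WithLp.linearEquiv 2 ℝ (Fin d → ℝ)).symm

variable {d : ℕ}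

lemma toE_apply (x : Fin d → ℝ) (i : Fin d) : toE d x i = x i := rfl

lemma toE_symm_apply (x : EuclideanSpace ℝ (Fin d)) (i : Fin d) : (toE d).symm x i = x i := rfl

lemma euclNorm_eq (x : Fin d → ℝ) : euclNorm x = ‖toE d x‖ := by
  rw [EuclideanSpace.norm_eq, euclNorm]
  congr 1
  refine Finset.sum_congr rfl fun i _ => ?_
  rw [toE_apply, Real.norm_eq_abs, sq_abs]

lemma norm_le_of_abs_le {x y : EuclideanSpace ℝ (Fin d)} (hxy : ∀ i, |x i| ≤ |y i|) :
    ‖x‖ ≤ ‖y‖ := by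
  rw [EuclideanSpace.norm_eq, EuclideanSpace.norm_eq]
  apply Real.sqrt_le_sqrt
  refine Finset.sum_le_sum fun i _ => ?_
  exact pow_le_pow_left₀ (abs_nonneg _) (hxy i) 2

lemma abs_le_norm (x : EuclideanSpace ℝ (Fin d)) (i : Fin d) : |x i| ≤ ‖x‖ := by
  rw [EuclideanSpace.norm_eq, ← Real.sqrt_sq_eq_abs]
  apply Real.sqrt_le_sqrt
  calc x i ^ 2 = ‖x i‖ ^ 2 := by rw [Real.norm_eq_abs, sq_abs]
    _ ≤ ∑ j, ‖x j‖ ^ 2 :=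
        Finset.single_le_sum (f := fun j => ‖x j‖ ^ 2) (fun j _ => sq_nonneg _)
          (Finset.mem_univ i)


/-- The matrix as a continuous linear map on Euclidean space. -/
noncomputable def mCLM (d : ℕ) (M : Matrix (Fin d) (Fin d) ℝ) :
    EuclideanSpace ℝ (Fin d) →L[ℝ] EuclideanSpace ℝ (Fin d) :=
  LinearMap.toContinuousLinearMap ((toE d).conj (Matrix.toLin' M))

lemma mCLM_apply (M : Matrix (Fin d) (Fin d) ℝ) (x : Fin d → ℝ) :
    mCLM d M (toE d x) = toE d (M.mulVec x) := by
  simp [mCLM, LinearEquiv.conj_apply, Matrix.toLin'_apply]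

lemma euclNorm_mulVec_le_mCLM (M : Matrix (Fin d) (Fin d) ℝ) (x : Fin d → ℝ) :
    euclNorm (M.mulVec x) ≤ ‖mCLM d M‖ * euclNorm x := by
  rw [euclNorm_eq, euclNorm_eq, ← mCLM_apply]
  exact (mCLM d M).le_opNorm _

lemma bddAbove_opNorm_set (M : Matrix (Fin d) (Fin d) ℝ) :
    BddAbove ((fun x => euclNorm (M.mulVec x)) '' {x : Fin d → ℝ | euclNorm x ≤ 1}) := by
  refine ⟨‖mCLM d M‖, ?_⟩
  rintro y ⟨x, hx, rfl⟩
  calc euclNorm (M.mulVec x) ≤ ‖mCLM d M‖ * euclNorm x := euclNorm_mulVec_le_mCLM M x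
    _ ≤ ‖mCLM d M‖ * 1 := by
        refine mul_le_mul_of_nonneg_left hx (norm_nonneg _)
    _ = ‖mCLM d M‖ := mul_one _

lemma euclNorm_nonneg (x : Fin d → ℝ) : 0 ≤ euclNorm x := Real.sqrt_nonneg _

lemma zero_mem_opNorm_set (M : Matrix (Fin d) (Fin d) ℝ) :
    (0 : ℝ) ∈ ((fun x => euclNorm (M.mulVec x)) '' {x : Fin d → ℝ | euclNorm x ≤ 1}) := by
  refine ⟨0, ?_, ?_⟩
  · simp only [Set.mem_setOf_eq, euclNorm]
    simp
  · simp only [Matrix.mulVec_zero, euclNorm]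
    simp

lemma opNorm_nonneg (M : Matrix (Fin d) (Fin d) ℝ) : 0 ≤ opNorm M :=
  le_csSup (bddAbove_opNorm_set M) (zero_mem_opNorm_set M)

lemma euclNorm_smul (c : ℝ) (x : Fin d → ℝ) : euclNorm (c • x) = |c| * euclNorm x := by
  rw [euclNorm_eq, euclNorm_eq, _root_.map_smul, norm_smul, Real.norm_eq_abs]

lemma euclNorm_pos {x : Fin d → ℝ} (hx : x ≠ 0) : 0 < euclNorm x := by
  rw [euclNorm_eq]
  have : toE d x ≠ 0 := fun h => hx (by simpa using congrArg (toE d).symm h)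
  exact norm_pos_iff.mpr this

lemma euclNorm_mulVec_le (M : Matrix (Fin d) (Fin d) ℝ) (x : Fin d → ℝ) :
    euclNorm (M.mulVec x) ≤ opNorm M * euclNorm x := by
  rcases eq_or_ne x 0 with rfl | hx
  · simp only [Matrix.mulVec_zero]
    have h1 : euclNorm (0 : Fin d → ℝ) = 0 := by simp [euclNorm]
    rw [h1, mul_zero]
  · set t := euclNorm x with ht
    have htpos : 0 < t := euclNorm_pos hx
    have h1 : euclNorm (t⁻¹ • x) = 1 := by
      rw [euclNorm_smul, abs_of_pos (inv_pos.mpr htpos), ← ht, inv_mul_cancel₀ htpos.ne']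
    have hmem : euclNorm (M.mulVec (t⁻¹ • x)) ∈
        ((fun x => euclNorm (M.mulVec x)) '' {x : Fin d → ℝ | euclNorm x ≤ 1}) :=
      ⟨t⁻¹ • x, by simp [h1], rfl⟩
    have h2 : euclNorm (M.mulVec (t⁻¹ • x)) ≤ opNorm M :=
      le_csSup (bddAbove_opNorm_set M) hmem
    have h3 : M.mulVec (t⁻¹ • x) = t⁻¹ • M.mulVec x := by
      rw [Matrix.mulVec_smul]
    rw [h3, euclNorm_smul, abs_of_pos (inv_pos.mpr htpos)] at h2
    calc euclNorm (M.mulVec x) = t * (t⁻¹ * euclNorm (M.mulVec x)) := by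
          field_simp
      _ ≤ t * opNorm M := mul_le_mul_of_nonneg_left h2 htpos.le
      _ = opNorm M * t := mul_comm _ _


/-- Basis of `ℝ^d` given by the columns of an invertible matrix, living in Euclidean space. -/
noncomputable def latB (g : Matrix (Fin d) (Fin d) ℝ) (hg : Invertible g) :
    Module.Basis (Fin d) ℝ (EuclideanSpace ℝ (Fin d)) :=
  (Pi.basisFun ℝ (Fin d)).map ((g.toLinearEquiv' hg).trans (toE d))

lemma latB_apply (g : Matrix (Fin d) (Fin d) ℝ) (hg : Invertible g) (j : Fin d) :
    latB g hg j = toE d (g.mulVec (Pi.single j 1)) := by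
  rw [latB, Module.Basis.map_apply, LinearEquiv.trans_apply]
  congr 1
  have h0 : (g.toLinearEquiv' hg) ((Pi.basisFun ℝ (Fin d)) j) =
      Matrix.toLin' g ((Pi.basisFun ℝ (Fin d)) j) := by
    rw [← Matrix.toLinearEquiv'_apply g hg]
    rfl
  rw [h0, Matrix.toLin'_apply, Pi.basisFun_apply]

lemma sum_zsmul_latB (g : Matrix (Fin d) (Fin d) ℝ) (hg : Invertible g) (w : Fin d → ℤ) :
    ∑ i, w i • latB g hg i = toE d (g.mulVec (fun i => (w i : ℝ))) := by
  calc ∑ i, w i • latB g hg i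
      = ∑ i, toE d (g.mulVec ((w i : ℝ) • (Pi.single i 1 : Fin d → ℝ))) := by
        refine Finset.sum_congr rfl fun i _ => ?_
        rw [latB_apply, Matrix.mulVec_smul, (toE d).map_smul, Int.cast_smul_eq_zsmul]
    _ = toE d (g.mulVec (∑ i, (w i : ℝ) • (Pi.single i 1 : Fin d → ℝ))) := by
        simp_rw [← Matrix.mulVecLin_apply]
        rw [← map_sum (toE d), ← map_sum g.mulVecLin]
    _ = toE d (g.mulVec (fun i => (w i : ℝ))) := by
        have hv : (∑ i, (w i : ℝ) • (Pi.single i 1 : Fin d → ℝ)) = fun i => (w i : ℝ) := by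
          funext j
          rw [Finset.sum_apply]
          simp [Pi.single_apply]
        rw [hv]

lemma mem_latticeSpan_iff (g : Matrix (Fin d) (Fin d) ℝ) (hg : Invertible g)
    (x : EuclideanSpace ℝ (Fin d)) :
    x ∈ span ℤ (Set.range (latB g hg)) ↔
      ∃ w : Fin d → ℤ, x = toE d (g.mulVec (fun i => (w i : ℝ))) := by
  rw [mem_span_range_iff_exists_fun]
  constructor
  · rintro ⟨w, hw⟩
    exact ⟨w, by rw [← hw, sum_zsmul_latB]⟩
  · rintro ⟨w, rfl⟩
    exact ⟨w, by rw [sum_zsmul_latB]⟩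


lemma volume_fundamentalDomain_latB (g : Matrix (Fin d) (Fin d) ℝ) (hg : Invertible g)
    (hdet : g.det = 1) :
    volume (ZSpan.fundamentalDomain (latB g hg)) = 1 := by
  classical
  set b₀ : Module.Basis (Fin d) ℝ (EuclideanSpace ℝ (Fin d)) :=
    (EuclideanSpace.basisFun (Fin d) ℝ).toBasis with hb₀
  rw [ZSpan.measure_fundamentalDomain _ volume b₀]
  have hdet1 : b₀.det (latB g hg) = 1 := by
    rw [Module.Basis.det_apply]
    have : b₀.toMatrix (latB g hg) = g := by
      ext i j
      rw [Module.Basis.toMatrix_apply, hb₀, OrthonormalBasis.coe_toBasis_repr_apply,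
        EuclideanSpace.basisFun_repr, latB_apply]
      show (g.mulVec (Pi.single j 1)) i = g i j
      rw [Matrix.mulVec_single]
      simp
    rw [this, hdet]
  have hvol0 : volume (ZSpan.fundamentalDomain b₀) = 1 := by
    have hset : ZSpan.fundamentalDomain b₀ =
        (MeasurableEquiv.toLp 2 (Fin d → ℝ)).symm ⁻¹'
          (Set.univ.pi fun _ : Fin d => Set.Ico (0:ℝ) 1) := by
      ext x
      simp only [ZSpan.fundamentalDomain, Set.mem_setOf_eq, Set.mem_preimage, Set.mem_pi,
        Set.mem_univ, forall_true_left, hb₀, OrthonormalBasis.coe_toBasis_repr_apply,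
        EuclideanSpace.basisFun_repr]
      rfl
    rw [hset, MeasurePreserving.measure_preimage
      (EuclideanSpace.volume_preserving_symm_measurableEquiv_toLp (Fin d))
      (MeasurableSet.univ_pi fun _ => measurableSet_Ico).nullMeasurableSet]
    rw [volume_pi_pi]
    simp [Real.volume_Ico]
  rw [hdet1, hvol0, mul_one, abs_one, ENNReal.ofReal_one]

lemma exists_lattice_point_in_image (g : Matrix (Fin d) (Fin d) ℝ) (hg : Invertible g)
    (hdet : g.det = 1) (A : EuclideanSpace ℝ (Fin d) →ₗ[ℝ] EuclideanSpace ℝ (Fin d))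
    (hA : (2:ℝ≥0∞) ^ d < ENNReal.ofReal |LinearMap.det A| *
      volume (Metric.closedBall (0 : EuclideanSpace ℝ (Fin d)) 1)) :
    ∃ w : Fin d → ℤ, w ≠ 0 ∧
      toE d (g.mulVec (fun i => (w i : ℝ))) ∈ A '' Metric.closedBall 0 1 := by
  classical
  set b := latB g hg with hb
  have fund := ZSpan.isAddFundamentalDomain' b volume
  haveI : Countable (span ℤ (Set.range ⇑b)).toAddSubgroup :=
    inferInstanceAs (Countable (span ℤ (Set.range ⇑b)))
  have h_symm : ∀ x ∈ A '' Metric.closedBall (0 : EuclideanSpace ℝ (Fin d)) 1,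
      -x ∈ A '' Metric.closedBall (0 : EuclideanSpace ℝ (Fin d)) 1 := by
    rintro x ⟨y, hy, rfl⟩
    refine ⟨-y, ?_, by rw [map_neg]⟩
    rw [mem_closedBall_zero_iff] at hy ⊢
    simpa using hy
  have h_conv : Convex ℝ (A '' Metric.closedBall (0 : EuclideanSpace ℝ (Fin d)) 1) :=
    (convex_closedBall _ _).linear_image A
  have h_meas : volume (A '' Metric.closedBall (0 : EuclideanSpace ℝ (Fin d)) 1) =
      ENNReal.ofReal |LinearMap.det A| *
        volume (Metric.closedBall (0 : EuclideanSpace ℝ (Fin d)) 1) :=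
    Measure.addHaar_image_linearMap volume A _
  have hvol : volume (ZSpan.fundamentalDomain b) *
      2 ^ Module.finrank ℝ (EuclideanSpace ℝ (Fin d)) <
      volume (A '' Metric.closedBall (0 : EuclideanSpace ℝ (Fin d)) 1) := by
    rw [volume_fundamentalDomain_latB g hg hdet, one_mul, finrank_euclideanSpace_fin, h_meas]
    exact hA
  obtain ⟨x, hx0, hxK⟩ :=
    exists_ne_zero_mem_lattice_of_measure_mul_two_pow_lt_measure fund h_symm h_conv hvol
  have hxmem : (x : EuclideanSpace ℝ (Fin d)) ∈ span ℤ (Set.range ⇑b) := x.2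
  obtain ⟨w, hw⟩ := (mem_latticeSpan_iff g hg _).mp hxmem
  refine ⟨w, ?_, by rw [← hw]; exact hxK⟩
  rintro rfl
  apply hx0
  have h0 : (fun i : Fin d => (((0 : Fin d → ℤ) i : ℝ))) = (0 : Fin d → ℝ) := by
    funext i; simp
  have : (x : EuclideanSpace ℝ (Fin d)) = 0 := by
    rw [hw, h0, Matrix.mulVec_zero, map_zero]
  exact Subtype.ext this


lemma exists_ellipsoid (U : Submodule ℝ (EuclideanSpace ℝ (Fin d))) (hU : U ≠ ⊤)
    {s0 T : ℝ} (hs0 : 0 < s0) (hT : 1 ≤ T) :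
    ∃ A : EuclideanSpace ℝ (Fin d) →ₗ[ℝ] EuclideanSpace ℝ (Fin d),
      T * min s0 1 ^ (d - 1) ≤ LinearMap.det A ∧
      (∀ y, ‖A y‖ ≤ max s0 T * ‖y‖) ∧
      (∀ y, A y ∈ U → ‖A y‖ ≤ s0 * ‖y‖) := by
  classical
  have hT0 : (0:ℝ) < T := lt_of_lt_of_le zero_lt_one hT
  set k := Module.finrank ℝ U with hkdef
  have hk : k < d := by
    have := Submodule.finrank_lt (K := ℝ) (V := EuclideanSpace ℝ (Fin d)) hU
    rwa [finrank_euclideanSpace_fin] at this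
  set ub := stdOrthonormalBasis ℝ U with hub
  set v : Fin d → EuclideanSpace ℝ (Fin d) :=
    fun i => if hik : (i : ℕ) < k then ((ub ⟨i, hik⟩ : U) : EuclideanSpace ℝ (Fin d)) else 0
    with hvdef
  set sset : Set (Fin d) := {i | (i : ℕ) < k} with hsset
  have hv : Orthonormal ℝ (sset.restrict v) := by
    rw [orthonormal_iff_ite]
    rintro ⟨i, hi⟩ ⟨j, hj⟩
    have hi' : (i : ℕ) < k := hi
    have hj' : (j : ℕ) < k := hj
    have e1 : sset.restrict v ⟨i, hi⟩ = ((ub ⟨i, hi'⟩ : U) : EuclideanSpace ℝ (Fin d)) := by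
      show v i = _
      simp only [hvdef, dif_pos hi']
    have e2 : sset.restrict v ⟨j, hj⟩ = ((ub ⟨j, hj'⟩ : U) : EuclideanSpace ℝ (Fin d)) := by
      show v j = _
      simp only [hvdef, dif_pos hj']
    rw [e1, e2, ← Submodule.coe_inner]
    have horth := ub.orthonormal
    rw [orthonormal_iff_ite] at horth
    rw [horth ⟨i, hi'⟩ ⟨j, hj'⟩]
    by_cases hij : i = j
    · subst hij
      simp
    · have h1 : (⟨i, hi⟩ : sset) ≠ ⟨j, hj⟩ := by
        intro hcon
        exact hij (Subtype.ext_iff.mp hcon)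
      have h2 : (⟨(i : ℕ), hi'⟩ : Fin k) ≠ ⟨(j : ℕ), hj'⟩ := by
        intro hcon
        simp only [Fin.mk.injEq] at hcon
        exact hij (Fin.ext hcon)
      rw [if_neg h2, if_neg h1]
  obtain ⟨o, ho⟩ := hv.exists_orthonormalBasis_extension_of_card_eq
    (by simp [finrank_euclideanSpace_fin])
  have hoU : ∀ i : Fin d, ¬((i : ℕ) < k) → ∀ x ∈ U, (inner ℝ (o i) x : ℝ) = 0 := by
    intro i hik x hx
    have hUspan : (U : Set (EuclideanSpace ℝ (Fin d))) ⊆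
        (span ℝ (Set.range (fun j : Fin k => ((ub j : U) : EuclideanSpace ℝ (Fin d)))) :
          Set (EuclideanSpace ℝ (Fin d))) := by
      intro z hz
      have h1 : span ℝ (Set.range ⇑ub.toBasis) = (⊤ : Submodule ℝ U) := ub.toBasis.span_eq
      have h2 : U = Submodule.map U.subtype ⊤ := by
        rw [Submodule.map_subtype_top]
      rw [h2, ← h1, Submodule.map_span] at hz
      have h3 : (U.subtype '' Set.range ⇑ub.toBasis) =
          Set.range (fun j : Fin k => ((ub j : U) : EuclideanSpace ℝ (Fin d))) := by
        rw [← Set.range_comp]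
        congr 1
      rwa [h3] at hz
    have hx2 := hUspan hx
    rw [SetLike.mem_coe, mem_span_range_iff_exists_fun] at hx2
    obtain ⟨a, ha⟩ := hx2
    rw [← ha, inner_sum]
    refine Finset.sum_eq_zero fun j _ => ?_
    rw [real_inner_smul_right]
    have hj' : ((⟨(j : ℕ), lt_trans j.isLt hk⟩ : Fin d) : ℕ) < k := j.isLt
    have hvj : ((ub j : U) : EuclideanSpace ℝ (Fin d)) = o ⟨(j : ℕ), lt_trans j.isLt hk⟩ := by
      rw [ho _ hj']
      simp only [hvdef, dif_pos hj']
      rfl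
    rw [hvj]
    have hortho := o.orthonormal
    rw [orthonormal_iff_ite] at hortho
    rw [hortho i ⟨(j : ℕ), lt_trans j.isLt hk⟩, if_neg, mul_zero]
    intro hcontra
    apply hik
    rw [hcontra]
    exact hj'
  set c : Fin d → ℝ := fun i => if (i : ℕ) < k then s0 else T with hcdef
  have hcpos : ∀ i, 0 < c i := by
    intro i; by_cases hik : (i : ℕ) < k <;> simp [hcdef, hik, hs0, hT0]
  have hcle : ∀ i, c i ≤ max s0 T := by
    intro i; by_cases hik : (i : ℕ) < k <;> simp [hcdef, hik, le_max_left, le_max_right]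
  set scale : (Fin d → ℝ) →ₗ[ℝ] (Fin d → ℝ) := LinearMap.pi (fun i => c i • LinearMap.proj i)
    with hscale
  have hscale_apply : ∀ (x : Fin d → ℝ) i, scale x i = c i * x i := by
    intro x i
    simp [hscale, LinearMap.pi_apply]
  set A : EuclideanSpace ℝ (Fin d) →ₗ[ℝ] EuclideanSpace ℝ (Fin d) :=
    (o.repr.toLinearEquiv.symm.conj) ((toE d).conj scale) with hA
  have hArepr : ∀ (x : EuclideanSpace ℝ (Fin d)) i, o.repr (A x) i = c i * o.repr x i := by
    intro x i
    have h1 : A x = o.repr.toLinearEquiv.symm ((toE d) (scale ((toE d).symm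
        (o.repr.toLinearEquiv.symm.symm x)))) := by
      simp [hA, LinearEquiv.conj_apply]
    rw [h1]
    have h2 : o.repr (o.repr.toLinearEquiv.symm ((toE d) (scale ((toE d).symm
        (o.repr.toLinearEquiv.symm.symm x))))) = (toE d) (scale ((toE d).symm (o.repr x))) := by
      simp
    rw [h2, toE_apply, hscale_apply, toE_symm_apply]
  have hAdet : LinearMap.det A = ∏ i, c i := by
    rw [hA, LinearEquiv.conj_apply, LinearMap.comp_assoc, LinearMap.det_conj,
      LinearEquiv.conj_apply, LinearMap.comp_assoc, LinearMap.det_conj]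
    rw [← LinearMap.det_toMatrix']
    have : LinearMap.toMatrix' scale = Matrix.diagonal c := by
      ext i j
      rw [LinearMap.toMatrix'_apply, hscale_apply, Matrix.diagonal_apply]
      by_cases hij : i = j
      · subst hij; simp
      · simp [hij, Ne.symm hij]
    rw [this, Matrix.det_diagonal]
  refine ⟨A, ?_, ?_, ?_⟩
  · rw [hAdet]
    set i₀ : Fin d := ⟨k, hk⟩ with hi₀
    have hci₀ : c i₀ = T := by simp [hcdef, hi₀]
    rw [← Finset.mul_prod_erase Finset.univ c (Finset.mem_univ i₀), hci₀]
    have hcard : (Finset.univ.erase i₀).card = d - 1 := by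
      rw [Finset.card_erase_of_mem (Finset.mem_univ i₀), Finset.card_univ, Fintype.card_fin]
    have hprodge : min s0 1 ^ (d - 1) ≤ ∏ i ∈ Finset.univ.erase i₀, c i := by
      rw [← hcard, ← Finset.prod_const]
      refine Finset.prod_le_prod (fun i _ => ?_) (fun i _ => ?_)
      · exact le_min hs0.le zero_le_one
      · by_cases hik : (i : ℕ) < k
        · simp only [hcdef, if_pos hik]
          exact min_le_left _ _
        · simp only [hcdef, if_neg hik]
          exact (min_le_right _ _).trans hT
    calc T * min s0 1 ^ (d - 1) ≤ T * ∏ i ∈ Finset.univ.erase i₀, c i :=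
          mul_le_mul_of_nonneg_left hprodge hT0.le
      _ = _ := rfl
  · intro y
    have h1 : ‖A y‖ = ‖o.repr (A y)‖ := (o.repr.norm_map (A y)).symm
    have h2 : ‖o.repr (A y)‖ ≤ ‖(max s0 T) • (o.repr y)‖ := by
      apply norm_le_of_abs_le
      intro i
      have : ((max s0 T) • (o.repr y)) i = max s0 T * o.repr y i := rfl
      rw [this, hArepr, abs_mul, abs_mul]
      refine mul_le_mul_of_nonneg_right ?_ (abs_nonneg _)
      rw [abs_of_pos (hcpos i), abs_of_pos (lt_max_of_lt_right hT0)]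
      exact hcle i
    rw [h1]
    refine h2.trans ?_
    rw [norm_smul, Real.norm_eq_abs, abs_of_pos (lt_max_of_lt_right hT0),
      o.repr.norm_map]
  · intro y hyU
    have h1 : ‖A y‖ = ‖o.repr (A y)‖ := (o.repr.norm_map (A y)).symm
    have h2 : ‖o.repr (A y)‖ ≤ ‖s0 • (o.repr y)‖ := by
      apply norm_le_of_abs_le
      intro i
      have hsm : (s0 • (o.repr y)) i = s0 * o.repr y i := rfl
      by_cases hik : (i : ℕ) < k
      · rw [hsm, hArepr, hcdef]
        simp only [if_pos hik]
        exact le_rfl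
      · have h0 : o.repr (A y) i = 0 := by
          rw [o.repr_apply_apply]
          exact hoU i hik _ hyU
        rw [h0, hsm, abs_zero]
        exact abs_nonneg _
    rw [h1]
    refine h2.trans ?_
    rw [norm_smul, Real.norm_eq_abs, abs_of_pos hs0, o.repr.norm_map]

end InjRadAux

open InjRadAux MeasureTheory Submodule Set
open scoped ENNReal

/-- Lower bound for the injectivity radius: there is `C₁ > 0` depending only on `d`
such that for `g ∈ SL_d(ℝ)`, any `h ∈ SL_d(ℝ)` stabilizing the lattice `gℤ^d` with
`‖h − I_d‖_op < C₁ δ(g)^d` must equal the identity. -/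
theorem injectivity_radius_lower_bound (d : ℕ) (hd : 2 ≤ d) :
    ∃ C1 : ℝ, 0 < C1 ∧
      ∀ g h : Matrix (Fin d) (Fin d) ℝ, g.det = 1 → h.det = 1 →
        (fun x => h.mulVec x) '' latticeOf g = latticeOf g →
        opNorm (h - 1) < C1 * (deltaMin g) ^ d →
        h = 1 := by

  classical
  have hd0 : 0 < d := lt_of_lt_of_le two_pos hd
  have hd1 : d - 1 + 1 = d := Nat.succ_pred_eq_of_pos hd0
  set VBe : ℝ≥0∞ := volume (Metric.closedBall (0 : EuclideanSpace ℝ (Fin d)) 1) with hVBedef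
  have hVBe_top : VBe ≠ ⊤ := (measure_closedBall_lt_top).ne
  have hVBe_ne : VBe ≠ 0 := by
    have h1 : (0:ℝ≥0∞) < volume (Metric.ball (0 : EuclideanSpace ℝ (Fin d)) 1) :=
      Metric.measure_ball_pos volume 0 one_pos
    exact (lt_of_lt_of_le h1 (measure_mono Metric.ball_subset_closedBall)).ne'
  set VB : ℝ := VBe.toReal with hVBdef
  have hVBpos : 0 < VB := ENNReal.toReal_pos hVBe_ne hVBe_top
  have hVBe_eq : VBe = ENNReal.ofReal VB := (ENNReal.ofReal_toReal hVBe_top).symm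
  have hENN : ∀ a : ℝ, (2:ℝ)^d < a * VB → (2:ℝ≥0∞)^d < ENNReal.ofReal a * VBe := by
    intro a ha
    have hapos : 0 < a := by nlinarith [pow_pos (show (0:ℝ) < 2 by norm_num) d, hVBpos]
    rw [hVBe_eq, ← ENNReal.ofReal_mul hapos.le]
    have h2d : (2:ℝ≥0∞)^d = ENNReal.ofReal ((2:ℝ)^d) := by
      rw [ENNReal.ofReal_pow (by norm_num)]
      norm_num
    rw [h2d]
    exact (ENNReal.ofReal_lt_ofReal_iff (by positivity)).mpr ha
  set β : ℝ := 2^d / VB with hβdef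
  have hβpos : 0 < β := by positivity
  set Δ : ℝ := 2*(1+1/VB) with hΔdef
  have hΔpos : 0 < Δ := by positivity
  have hΔd : (2:ℝ)^d < Δ^d * VB := by
    have hb1 : (1:ℝ) ≤ 1 + 1/VB := le_add_of_nonneg_right (by positivity)
    have h1 : (1 + 1/VB : ℝ) ≤ (1+1/VB)^d := le_self_pow₀ hb1 hd0.ne'
    have h2 : Δ^d = 2^d * (1+1/VB)^d := mul_pow 2 _ d
    have h3 : (1+1/VB)*VB = VB + 1 := by field_simp
    calc (2:ℝ)^d = 2^d * 1 := (mul_one _).symm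
      _ < 2^d * ((1+1/VB)^d * VB) := by
          apply mul_lt_mul_of_pos_left ?_ (pow_pos two_pos d)
          calc (1:ℝ) < (1+1/VB)*VB := by rw [h3]; linarith
            _ ≤ (1+1/VB)^d * VB := mul_le_mul_of_nonneg_right h1 hVBpos.le
      _ = Δ^d * VB := by rw [h2]; ring
  set C2 : ℝ := Δ^d/2 + (β+1)*(Δ+2)^(d-1) with hC2def
  have hC2 : 0 < C2 := by positivity
  refine ⟨1/C2, by positivity, ?_⟩
  intro g h hgdet hhdet hlat hop
  by_contra hne1
  have hgu : IsUnit g.det := by rw [hgdet]; exact isUnit_one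
  have hg : Invertible g := g.invertibleOfIsUnitDet hgu
  set δ : ℝ := deltaMin g with hδdef
  set S : Set ℝ :=
    {r | ∃ v : Fin d → ℤ, v ≠ 0 ∧ r = euclNorm (g.mulVec (fun i => (v i : ℝ)))} with hSdef
  have hSne : S.Nonempty := by
    refine ⟨euclNorm (g.mulVec (fun i => ((1:ℤ) : ℝ))), fun _ => 1, ?_, rfl⟩
    intro hcontra
    have := congrFun hcontra ⟨0, hd0⟩
    simp at this
  have hbdd : BddBelow S := by
    refine ⟨0, ?_⟩
    rintro r ⟨v, hv, rfl⟩
    exact euclNorm_nonneg _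
  have hδle : ∀ w : Fin d → ℤ, w ≠ 0 → δ ≤ euclNorm (g.mulVec (fun i => (w i : ℝ))) := by
    intro w hw
    exact csInf_le hbdd ⟨w, hw, rfl⟩
  have hδpos : 0 < δ := by
    set Cg : ℝ := ‖mCLM d g⁻¹‖ with hCgdef
    have hCg0 : 0 ≤ Cg := norm_nonneg _
    have hlb : ∀ r ∈ S, (Cg + 1)⁻¹ ≤ r := by
      rintro r ⟨v, hv, rfl⟩
      have hj : ∃ j, v j ≠ 0 := by
        by_contra hcon
        push_neg at hcon
        exact hv (funext fun j => hcon j)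
      obtain ⟨j, hj⟩ := hj
      have h1 : (1:ℝ) ≤ euclNorm (fun i => (v i : ℝ)) := by
        rw [euclNorm_eq]
        calc (1:ℝ) ≤ |((v j : ℝ))| := by
              rw [← Int.cast_abs]
              exact_mod_cast Int.one_le_abs hj
          _ = |toE d (fun i => (v i : ℝ)) j| := rfl
          _ ≤ ‖toE d (fun i => (v i : ℝ))‖ := abs_le_norm _ j
      have h2 : euclNorm ((g⁻¹).mulVec (g.mulVec (fun i => (v i : ℝ)))) ≤
          Cg * euclNorm (g.mulVec (fun i => (v i : ℝ))) :=
        euclNorm_mulVec_le_mCLM _ _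
      have h3 : (g⁻¹).mulVec (g.mulVec (fun i => (v i : ℝ))) = (fun i => (v i : ℝ)) := by
        rw [Matrix.mulVec_mulVec, Matrix.nonsing_inv_mul g hgu, Matrix.one_mulVec]
      rw [h3] at h2
      have h4 : 0 ≤ euclNorm (g.mulVec (fun i => (v i : ℝ))) := euclNorm_nonneg _
      rw [inv_le_iff_one_le_mul₀ (by positivity)]
      nlinarith
    exact lt_of_lt_of_le (by positivity) (le_csInf hSne hlb)
  have hδΔ : δ ≤ Δ := by
    have hcond : (2:ℝ≥0∞) ^ d < ENNReal.ofReal |LinearMap.det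
        (Δ • (LinearMap.id : EuclideanSpace ℝ (Fin d) →ₗ[ℝ] EuclideanSpace ℝ (Fin d)))| *
        volume (Metric.closedBall (0 : EuclideanSpace ℝ (Fin d)) 1) := by
      have hdet : LinearMap.det
          (Δ • (LinearMap.id : EuclideanSpace ℝ (Fin d) →ₗ[ℝ] EuclideanSpace ℝ (Fin d))) =
          Δ ^ d := by
        rw [LinearMap.det_smul, LinearMap.det_id, mul_one, finrank_euclideanSpace_fin]
      rw [hdet, abs_of_pos (pow_pos hΔpos d)]
      exact hENN _ hΔd
    obtain ⟨w, hw0, hwmem⟩ := exists_lattice_point_in_image g hg hgdet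
      (Δ • (LinearMap.id : EuclideanSpace ℝ (Fin d) →ₗ[ℝ] EuclideanSpace ℝ (Fin d))) hcond
    · obtain ⟨y, hy, hAy⟩ := hwmem
      have hyn : ‖y‖ ≤ 1 := mem_closedBall_zero_iff.mp hy
      calc δ ≤ euclNorm (g.mulVec (fun i => (w i : ℝ))) := hδle w hw0
        _ = ‖toE d (g.mulVec (fun i => (w i : ℝ)))‖ := euclNorm_eq _
        _ = ‖Δ • y‖ := by rw [← hAy]; rfl
        _ = Δ * ‖y‖ := by rw [norm_smul, Real.norm_eq_abs, abs_of_pos hΔpos]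
        _ ≤ Δ * 1 := mul_le_mul_of_nonneg_left hyn hΔpos.le
        _ = Δ := mul_one _
  set U : Submodule ℝ (EuclideanSpace ℝ (Fin d)) :=
    Submodule.map (toE d).toLinearMap (LinearMap.ker (Matrix.toLin' (h - 1))) with hUdef
  have hmemU : ∀ x : EuclideanSpace ℝ (Fin d),
      x ∈ U ↔ h.mulVec ((toE d).symm x) = (toE d).symm x := by
    intro x
    constructor
    · rintro ⟨y, hy, rfl⟩
      rw [SetLike.mem_coe, LinearMap.mem_ker, Matrix.toLin'_apply, Matrix.sub_mulVec,
        Matrix.one_mulVec, sub_eq_zero] at hy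
      simpa using hy
    · intro hx
      refine ⟨(toE d).symm x, ?_, by simp⟩
      rw [SetLike.mem_coe, LinearMap.mem_ker, Matrix.toLin'_apply, Matrix.sub_mulVec,
        Matrix.one_mulVec, sub_eq_zero]
      exact hx
  have hUne : U ≠ ⊤ := by
    intro htop
    apply hne1
    have hxall : ∀ y : Fin d → ℝ, h.mulVec y = y := by
      intro y
      have hmem : toE d y ∈ U := htop ▸ Submodule.mem_top
      have := (hmemU (toE d y)).mp hmem
      simpa using this
    ext i j
    have h2 := hxall (Pi.single j 1)
    rw [Matrix.mulVec_single] at h2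
    have h3 := congrFun h2 i
    simp only [Pi.smul_apply, Matrix.col_apply, MulOpposite.op_one, one_smul] at h3
    rw [h3, Matrix.one_apply, Pi.single_apply]
  set s0 : ℝ := δ/2 with hs0def
  have hs0 : 0 < s0 := half_pos hδpos
  set T : ℝ := (β+1)*(1+1/s0)^(d-1) with hTdef
  have hbase1 : (1:ℝ) ≤ 1 + 1/s0 := le_add_of_nonneg_right (by positivity)
  have hT : 1 ≤ T := by
    have h1 : (1:ℝ) ≤ (1+1/s0)^(d-1) := by
      simpa using pow_le_pow_left₀ zero_le_one hbase1 (d-1)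
    nlinarith [hβpos]
  have hT0 : (0:ℝ) < T := lt_of_lt_of_le zero_lt_one hT
  obtain ⟨A, hAdet, hAnorm, hAU⟩ := exists_ellipsoid U hUne hs0 hT
  have hm1 : (1:ℝ) ≤ (1+1/s0) * min s0 1 := by
    rcases min_cases s0 1 with ⟨hmeq, hmle⟩ | ⟨hmeq, hmle⟩
    · rw [hmeq, add_mul, one_mul, one_div, inv_mul_cancel₀ hs0.ne']
      linarith
    · rw [hmeq, mul_one]
      exact hbase1
  have hdetlb : β < T * min s0 1 ^ (d-1) := by
    have h1 : T * min s0 1 ^ (d-1) = (β+1) * ((1+1/s0) * min s0 1)^(d-1) := by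
      rw [mul_pow, hTdef]; ring
    have h2 : (1:ℝ) ≤ ((1+1/s0) * min s0 1)^(d-1) := by
      simpa using pow_le_pow_left₀ zero_le_one hm1 (d-1)
    calc β < β + 1 := lt_add_one β
      _ = (β+1)*1 := (mul_one _).symm
      _ ≤ (β+1)*((1+1/s0)*min s0 1)^(d-1) := mul_le_mul_of_nonneg_left h2 (by positivity)
      _ = T * min s0 1 ^ (d-1) := h1.symm
  have hvolcond : (2:ℝ≥0∞)^d < ENNReal.ofReal |LinearMap.det A| * VBe := by
    apply hENN
    have hb2 : β < |LinearMap.det A| := lt_of_lt_of_le hdetlb (hAdet.trans (le_abs_self _))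
    rw [hβdef] at hb2
    exact (div_lt_iff₀ hVBpos).mp hb2
  obtain ⟨w, hw0, hwmem⟩ := exists_lattice_point_in_image g hg hgdet A hvolcond
  obtain ⟨y, hy, hAy⟩ := hwmem
  have hyn : ‖y‖ ≤ 1 := mem_closedBall_zero_iff.mp hy
  set x₀ : EuclideanSpace ℝ (Fin d) := toE d (g.mulVec (fun i => (w i : ℝ))) with hx₀def
  have hx₀norm : euclNorm (g.mulVec (fun i => (w i : ℝ))) = ‖x₀‖ := euclNorm_eq _
  have hx₀δ : δ ≤ ‖x₀‖ := by rw [← hx₀norm]; exact hδle w hw0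
  have hAyx : A y = x₀ := hAy
  have hx₀U : x₀ ∉ U := by
    intro hmem
    have h1 : ‖x₀‖ ≤ s0 * ‖y‖ := by
      rw [← hAyx]
      exact hAU y (by rw [hAyx]; exact hmem)
    have h2 : s0 * ‖y‖ ≤ s0 := by
      calc s0 * ‖y‖ ≤ s0 * 1 := mul_le_mul_of_nonneg_left hyn hs0.le
        _ = s0 := mul_one _
    have h3 : δ ≤ s0 := le_trans hx₀δ (le_trans h1 h2)
    rw [hs0def] at h3
    linarith
  have hx₀max : ‖x₀‖ ≤ max s0 T := by
    rw [← hAyx]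
    calc ‖A y‖ ≤ max s0 T * ‖y‖ := hAnorm y
      _ ≤ max s0 T * 1 := mul_le_mul_of_nonneg_left hyn (le_trans hT0.le (le_max_right s0 T))
      _ = max s0 T := mul_one _
  have hx₀lat : g.mulVec (fun i => (w i : ℝ)) ∈ latticeOf g := ⟨w, rfl⟩
  have hhx₀ : h.mulVec (g.mulVec (fun i => (w i : ℝ))) ∈ latticeOf g := by
    rw [← hlat]
    exact ⟨_, hx₀lat, rfl⟩
  obtain ⟨u, hu⟩ := hhx₀
  have huw : u - w ≠ 0 := by
    intro h0
    apply hx₀U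
    rw [hmemU]
    have hsymm : (toE d).symm x₀ = g.mulVec (fun i => (w i : ℝ)) := by
      rw [hx₀def]
      simp
    rw [hsymm, hu]
    have huweq : u = w := by rwa [sub_eq_zero] at h0
    rw [huweq]
  have hdiff : h.mulVec (g.mulVec (fun i => (w i : ℝ))) - g.mulVec (fun i => (w i : ℝ)) =
      g.mulVec (fun i => (((u - w) i : ℤ) : ℝ)) := by
    rw [hu]
    have hcast : (fun i => (((u - w) i : ℤ) : ℝ)) =
        (fun i => ((u i : ℤ) : ℝ)) - (fun i => ((w i : ℤ) : ℝ)) := by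
      funext i
      simp only [Pi.sub_apply]
      push_cast
      ring
    rw [hcast, ← Matrix.mulVecLin_apply, ← Matrix.mulVecLin_apply, ← Matrix.mulVecLin_apply,
      ← map_sub]
  have hkey : δ ≤ euclNorm ((h - 1).mulVec (g.mulVec (fun i => (w i : ℝ)))) := by
    have hsub : (h - 1).mulVec (g.mulVec (fun i => (w i : ℝ))) =
        h.mulVec (g.mulVec (fun i => (w i : ℝ))) - g.mulVec (fun i => (w i : ℝ)) := by
      rw [Matrix.sub_mulVec, Matrix.one_mulVec]
    rw [hsub, hdiff]
    exact hδle _ huw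
  have h5 : euclNorm ((h - 1).mulVec (g.mulVec (fun i => (w i : ℝ)))) ≤
      opNorm (h - 1) * ‖x₀‖ := by
    have := euclNorm_mulVec_le (h - 1) (g.mulVec (fun i => (w i : ℝ)))
    rwa [hx₀norm] at this
  have h6 : opNorm (h - 1) * ‖x₀‖ ≤ opNorm (h - 1) * max s0 T :=
    mul_le_mul_of_nonneg_left hx₀max (opNorm_nonneg _)
  have h7 : opNorm (h - 1) * max s0 T < (1/C2 * δ^d) * max s0 T :=
    mul_lt_mul_of_pos_right hop (lt_of_lt_of_le hT0 (le_max_right s0 T))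
  have hδd2 : δ^d = δ * δ^(d-1) := by
    conv_lhs => rw [← hd1]
    rw [pow_succ']
  have hm : max s0 T * δ^(d-1) ≤ C2 := by
    have hbs : s0 * δ^(d-1) ≤ Δ^d/2 := by
      have he : s0 * δ^(d-1) = δ^d/2 := by rw [hδd2, hs0def]; ring
      rw [he]
      have hpow : δ^d ≤ Δ^d := pow_le_pow_left₀ hδpos.le hδΔ d
      linarith
    have hbT : T * δ^(d-1) ≤ (β+1)*(Δ+2)^(d-1) := by
      have h9 : T * δ^(d-1) = (β+1) * ((1+1/s0)*δ)^(d-1) := by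
        rw [mul_pow, hTdef]; ring
      have h10 : (1+1/s0)*δ = δ + 2 := by
        rw [hs0def]
        field_simp
      have h11 : ((1+1/s0)*δ)^(d-1) ≤ (Δ+2)^(d-1) := by
        rw [h10]
        exact pow_le_pow_left₀ (by linarith) (by linarith) (d-1)
      rw [h9]
      exact mul_le_mul_of_nonneg_left h11 (by positivity)
    have hmm : max s0 T * δ^(d-1) = max (s0 * δ^(d-1)) (T * δ^(d-1)) :=
      max_mul_of_nonneg _ _ (pow_nonneg hδpos.le _)
    rw [hmm, hC2def]
    apply max_le
    · exact hbs.trans (le_add_of_nonneg_right (by positivity))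
    · exact hbT.trans (le_add_of_nonneg_left (by positivity))
  have h8 : (1/C2 * δ^d) * max s0 T ≤ δ := by
    have he : (1/C2 * δ^d) * max s0 T = (1/C2) * (δ * (max s0 T * δ^(d-1))) := by
      rw [hδd2]; ring
    rw [he]
    calc (1/C2) * (δ * (max s0 T * δ^(d-1))) ≤ (1/C2) * (δ * C2) := by
          refine mul_le_mul_of_nonneg_left ?_ (by positivity)
          exact mul_le_mul_of_nonneg_left hm hδpos.le
      _ = δ := by field_simp
  have hfinal : δ < δ := lt_of_le_of_lt (hkey.trans (h5.trans h6)) (lt_of_lt_of_le h7 h8)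
  exact lt_irrefl δ hfinal


end InjRadAuxSection
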